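/- For n ≥ 1 and μ ∈ [0, ln n], the value p = (1 + √(e^{-μ}(n-1)(n − e^μ)))/n lies in [1/n, 1] and satisfies p² + (1-p)²/(n-1) = e^{-μ}; that is, it inverts the collision (order-2 Rényi) entropy of v_n(p). -/

import Mathlib

theorem stmt_11 (n : ℕ) (hn : 1 ≤ n) (μ : ℝ) (hμ0 : 0 ≤ μ) (hμ : μ ≤ Real.log n)
    (p : ℝ)
    (hp : p = (1 + Real.sqrt (Real.exp (-μ) * ((n : ℝ) - 1) * ((n : ℝ) - Real.exp μ))) / (n : ℝ)) :
    p ∈ Set.Icc (1 / (n : ℝ)) 1 ∧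
    p ^ 2 + (1 - p) ^ 2 / ((n : ℝ) - 1) = Real.exp (-μ) := by
  rcases eq_or_lt_of_le hn with h1 | h2
  · -- n = 1
    have hn1 : n = 1 := h1.symm
    subst hn1
    have hμeq : μ = 0 := le_antisymm (by simpa using hμ) hμ0
    subst hμeq
    simp [Real.exp_zero] at hp
    subst hp
    norm_num
  · -- n ≥ 2
    have hN : (2 : ℝ) ≤ (n : ℝ) := by exact_mod_cast h2
    set N := (n : ℝ) with hNdef
    have hNpos : 0 < N := by linarith
    have hexpμ : Real.exp μ ≤ N := by
      calc Real.exp μ ≤ Real.exp (Real.log N) := Real.exp_le_exp.mpr hμ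
        _ = N := Real.exp_log hNpos
    have h1exp : 1 ≤ Real.exp μ := by
      simpa using Real.exp_le_exp.mpr hμ0
    have hinv : Real.exp (-μ) * Real.exp μ = 1 := by
      rw [← Real.exp_add]; simp
    have hinner : 0 ≤ Real.exp (-μ) * (N - 1) * (N - Real.exp μ) := by
      have h1 : (0:ℝ) ≤ Real.exp (-μ) := (Real.exp_pos _).le
      have : (0:ℝ) ≤ N - 1 := by linarith
      have : (0:ℝ) ≤ N - Real.exp μ := by linarith
      positivity
    set s := Real.sqrt (Real.exp (-μ) * (N - 1) * (N - Real.exp μ)) with hsdef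
    have hs0 : 0 ≤ s := Real.sqrt_nonneg _
    have hs2 : s ^ 2 = Real.exp (-μ) * (N - 1) * (N - Real.exp μ) := Real.sq_sqrt hinner
    have hsle : s ≤ N - 1 := by
      have hb : Real.exp (-μ) * (N - 1) * (N - Real.exp μ) ≤ (N - 1) ^ 2 := by
        have he1 : Real.exp (-μ) ≤ 1 := Real.exp_le_one_iff.mpr (by linarith)
        have := Real.exp_pos (-μ)
        nlinarith
      calc s ≤ Real.sqrt ((N - 1) ^ 2) := Real.sqrt_le_sqrt hb
        _ = N - 1 := by rw [Real.sqrt_sq (by linarith)]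
    constructor
    · constructor
      · rw [hp]; gcongr; linarith
      · rw [hp, div_le_one hNpos]; linarith
    · rw [hp]
      have hN1 : N - 1 ≠ 0 := by linarith
      have hNne : N ≠ 0 := ne_of_gt hNpos
      field_simp
      linear_combination N * hs2 + (N*(1-N)) * hinv
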